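/- Let F be a field, α ∈ F, and let ε : A_α → F be the augmentation homomorphism (the F-algebra map sending the images of x₁ and x₂ to 0), with M = ker ε. Then: (1) the F-vector space M/M² is 2-dimensional, with basis the images of x̄₁ and x̄₂ (the classes of the generators); and (2) if y₁, y₂ generate A_α as a unital F-algebra, then the images of y₁ − ε(y₁)·1 and y₂ − ε(y₂)·1 in M/M² form a basis of M/M² (equivalently, the 2×2 matrix of coefficients of the linear parts of y₁, y₂ is nonsingular). -/

import Mathlib

/-- The defining relation `x₁² + x₂² + α·x₁x₂` of the algebra `A_α`. -/
abbrev relElem (F : Type) [Field F] (α : F) : FreeAlgebra F (Fin 2) :=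
  FreeAlgebra.ι F (0 : Fin 2) * FreeAlgebra.ι F 0 + FreeAlgebra.ι F 1 * FreeAlgebra.ι F 1
    + α • (FreeAlgebra.ι F 0 * FreeAlgebra.ι F 1)

/-- `A_α = F⟨x₁,x₂ ∣ x₁² + x₂² + α·x₁x₂ = 0⟩`. -/
abbrev Aalg (F : Type) [Field F] (α : F) : Type :=
  (TwoSidedIdeal.span {relElem F α}).ringCon.Quotient

/-- The quotient map `F⟨x₁,x₂⟩ → A_α`. -/
abbrev AalgMk (F : Type) [Field F] (α : F) : FreeAlgebra F (Fin 2) →+* Aalg F α :=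
  (TwoSidedIdeal.span {relElem F α}).ringCon.mk'

section Aux
variable (F : Type) [Field F] (α : F)

noncomputable def psiF : FreeAlgebra F (Fin 2) →ₐ[F] TrivSqZeroExt F (Fin 2 → F) :=
  FreeAlgebra.lift F fun i => TrivSqZeroExt.inr (Pi.single i 1)

lemma psiF_rel : psiF F (relElem F α) = 0 := by
  simp [psiF, relElem, TrivSqZeroExt.inr_mul_inr]

lemma psiF_congr {a b : FreeAlgebra F (Fin 2)}
    (h : (TwoSidedIdeal.span {relElem F α}).ringCon a b) : psiF F a = psiF F b := by
  rw [TwoSidedIdeal.rel_iff] at h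
  have hmem : a - b ∈ TwoSidedIdeal.ker (psiF F).toRingHom := by
    refine TwoSidedIdeal.mem_span_iff.1 h _ ?_
    intro x hx
    simp only [Set.mem_singleton_iff] at hx
    subst hx
    rw [SetLike.mem_coe, TwoSidedIdeal.mem_ker]
    exact psiF_rel F α
  rw [TwoSidedIdeal.mem_ker] at hmem
  simpa [sub_eq_zero] using hmem

/-- The quotient map as an `AlgHom`. -/
def mkAlg : FreeAlgebra F (Fin 2) →ₐ[F] Aalg F α :=
  { AalgMk F α with commutes' := fun _ => rfl }

lemma mkAlg_apply (p : FreeAlgebra F (Fin 2)) : mkAlg F α p = AalgMk F α p := rfl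

noncomputable def phiF : Aalg F α →ₗ[F] (Fin 2 → F) where
  toFun := fun a => Quotient.liftOn' a (fun p => (psiF F p).snd)
    (fun _ _ h => congrArg TrivSqZeroExt.snd (psiF_congr F α h))
  map_add' := by
    rintro ⟨a⟩ ⟨b⟩
    show (psiF F (a + b)).snd = (psiF F a).snd + (psiF F b).snd
    rw [map_add, TrivSqZeroExt.snd_add]
  map_smul' := by
    rintro r ⟨a⟩
    show (psiF F (r • a)).snd = r • (psiF F a).snd
    rw [map_smul, TrivSqZeroExt.snd_smul]

lemma phiF_mk (p : FreeAlgebra F (Fin 2)) : phiF F α (AalgMk F α p) = (psiF F p).snd := rfl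

lemma surjAalg : ∀ a : Aalg F α, ∃ p, AalgMk F α p = a :=
  fun a => Quotient.inductionOn' a fun p => ⟨p, rfl⟩

lemma eps_eq (ε : Aalg F α →ₐ[F] F)
    (hε0 : ε (AalgMk F α (FreeAlgebra.ι F 0)) = 0)
    (hε1 : ε (AalgMk F α (FreeAlgebra.ι F 1)) = 0)
    (p : FreeAlgebra F (Fin 2)) : ε (AalgMk F α p) = (psiF F p).fst := by
  have h : ε.comp (mkAlg F α)
      = (TrivSqZeroExt.fstHom F F (Fin 2 → F)).comp (psiF F) := by
    apply FreeAlgebra.hom_ext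
    funext i
    fin_cases i <;>
      simp [psiF, mkAlg_apply, hε0, hε1] <;> assumption
  simpa [mkAlg_apply] using DFunLike.congr_fun h p

end Aux

lemma range_pair {X : Type*} (a b : X) : Set.range ![a, b] = {a, b} := by
  ext x
  constructor
  · rintro ⟨i, rfl⟩
    fin_cases i
    · exact Set.mem_insert _ _
    · exact Set.mem_insert_of_mem _ rfl
  · rintro (rfl | rfl)
    · exact ⟨0, rfl⟩
    · exact ⟨1, rfl⟩

/-- Let `ε : A_α → F` be the augmentation (the `F`-algebra map killing the images `x̄₁, x̄₂`
of the generators), `M = ker ε` and `M²` the `F`-span of products of two elements of `M`.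
Identifying `M/M²` with the image of `M` under the quotient map `A_α → A_α/M²`:
(1) `M/M²` is 2-dimensional with basis the images of `x̄₁, x̄₂`; and
(2) if `y₁, y₂` generate `A_α` as a unital `F`-algebra, then the images of
`y₁ - ε(y₁)·1` and `y₂ - ε(y₂)·1` in `M/M²` form a basis of `M/M²`. -/
theorem basis_of_augmentation_quotient (F : Type) [Field F] (α : F)
    (ε : Aalg F α →ₐ[F] F)
    (hε0 : ε (AalgMk F α (FreeAlgebra.ι F 0)) = 0)
    (hε1 : ε (AalgMk F α (FreeAlgebra.ι F 1)) = 0)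
    (M : Submodule F (Aalg F α)) (hM : M = LinearMap.ker ε.toLinearMap)
    (M2 : Submodule F (Aalg F α))
    (hM2 : M2 = Submodule.span F {x | ∃ a ∈ M, ∃ b ∈ M, x = a * b}) :
    -- (1) the images of `x̄₁, x̄₂` span the image of `M` in `A_α/M²`, are linearly
    -- independent, and `M/M²` is 2-dimensional
    (Submodule.map M2.mkQ M
        = Submodule.span F {M2.mkQ (AalgMk F α (FreeAlgebra.ι F 0)),
            M2.mkQ (AalgMk F α (FreeAlgebra.ι F 1))} ∧
      LinearIndependent F ![M2.mkQ (AalgMk F α (FreeAlgebra.ι F 0)),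
        M2.mkQ (AalgMk F α (FreeAlgebra.ι F 1))] ∧
      Module.finrank F (Submodule.map M2.mkQ M) = 2) ∧
    -- (2) for any unital algebra generators `y₁, y₂` of `A_α`, the images of
    -- `yᵢ - ε(yᵢ)·1` form a basis of `M/M²`
    (∀ y₁ y₂ : Aalg F α, Algebra.adjoin F ({y₁, y₂} : Set (Aalg F α)) = ⊤ →
      LinearIndependent F ![M2.mkQ (y₁ - ε y₁ • 1), M2.mkQ (y₂ - ε y₂ • 1)] ∧
      Submodule.map M2.mkQ M
        = Submodule.span F {M2.mkQ (y₁ - ε y₁ • 1), M2.mkQ (y₂ - ε y₂ • 1)}) := by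
  classical
  have hεM : ∀ a : Aalg F α, a ∈ M ↔ ε a = 0 := by
    intro a; rw [hM, LinearMap.mem_ker]; rfl
  have hx0M : AalgMk F α (FreeAlgebra.ι F 0) ∈ M := (hεM _).2 hε0
  have hx1M : AalgMk F α (FreeAlgebra.ι F 1) ∈ M := (hεM _).2 hε1
  have hMmul : ∀ x a : Aalg F α, a ∈ M → x * a ∈ M := by
    intro x a ha
    rw [hεM] at ha ⊢
    rw [map_mul, ha, mul_zero]
  have hMM2 : ∀ a ∈ M, ∀ b ∈ M, a * b ∈ M2 := by
    intro a ha b hb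
    rw [hM2]
    exact Submodule.subset_span ⟨a, ha, b, hb, rfl⟩
  have hM2M : M2 ≤ M := by
    rw [hM2, Submodule.span_le]
    rintro x ⟨a, ha, b, hb, rfl⟩
    exact hMmul a b hb
  -- key spanning lemma
  have hNtop : ∀ z₁ z₂ : Aalg F α, z₁ ∈ M → z₂ ∈ M →
      (∃ c₁ c₂ : F, Algebra.adjoin F ({z₁ + c₁ • 1, z₂ + c₂ • 1} : Set (Aalg F α)) = ⊤) →
      Submodule.span F {z₁, z₂} ⊔ M2 ⊔ Submodule.span F {(1 : Aalg F α)} = ⊤ := by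
    rintro z₁ z₂ hz₁ hz₂ ⟨c₁, c₂, hadj⟩
    have hQM : Submodule.span F {z₁, z₂} ⊔ M2 ≤ M := by
      refine sup_le ?_ hM2M
      rw [Submodule.span_le]
      rintro x (rfl | rfl)
      · exact hz₁
      · exact hz₂
    have hdec : ∀ x ∈ Submodule.span F {z₁, z₂} ⊔ M2 ⊔ Submodule.span F {(1 : Aalg F α)},
        ∃ c : F, ∃ q ∈ Submodule.span F {z₁, z₂} ⊔ M2, x = c • 1 + q := by
      intro x hx
      obtain ⟨q, hq, u, hu, rfl⟩ := Submodule.mem_sup.1 hx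
      obtain ⟨c, rfl⟩ := Submodule.mem_span_singleton.1 hu
      exact ⟨c, q, hq, (add_comm _ _)⟩
    have hone : (1 : Aalg F α) ∈ Submodule.span F {z₁, z₂} ⊔ M2
        ⊔ Submodule.span F {(1 : Aalg F α)} :=
      Submodule.mem_sup_right (Submodule.mem_span_singleton_self _)
    have hmul : ∀ x y : Aalg F α,
        x ∈ Submodule.span F {z₁, z₂} ⊔ M2 ⊔ Submodule.span F {(1 : Aalg F α)} →
        y ∈ Submodule.span F {z₁, z₂} ⊔ M2 ⊔ Submodule.span F {(1 : Aalg F α)} →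
        x * y ∈ Submodule.span F {z₁, z₂} ⊔ M2 ⊔ Submodule.span F {(1 : Aalg F α)} := by
      intro x y hx hy
      obtain ⟨c, q, hq, rfl⟩ := hdec x hx
      obtain ⟨c', q', hq', rfl⟩ := hdec y hy
      have hexp : (c • 1 + q) * (c' • 1 + q')
          = ((c • q' + c' • q) + q * q') + (c' * c) • (1 : Aalg F α) := by
        simp only [add_mul, mul_add, smul_mul_assoc, mul_smul_comm, one_mul, mul_one,
          smul_smul, smul_add]
        abel
      rw [hexp]
      refine Submodule.add_mem _ (Submodule.mem_sup_left ?_)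
        (Submodule.mem_sup_right (Submodule.smul_mem _ _ (Submodule.mem_span_singleton_self _)))
      exact Submodule.add_mem _
        (Submodule.add_mem _ (Submodule.smul_mem _ _ hq') (Submodule.smul_mem _ _ hq))
        (Submodule.mem_sup_right (hMM2 q (hQM hq) q' (hQM hq')))
    have hadjle : Algebra.adjoin F ({z₁ + c₁ • 1, z₂ + c₂ • 1} : Set (Aalg F α))
        ≤ (Submodule.span F {z₁, z₂} ⊔ M2 ⊔ Submodule.span F {(1 : Aalg F α)}).toSubalgebra
          hone hmul := by
      apply Algebra.adjoin_le
      rintro x (rfl | rfl) <;> rw [SetLike.mem_coe, Submodule.mem_toSubalgebra]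
      · exact Submodule.add_mem _
          (Submodule.mem_sup_left (Submodule.mem_sup_left
            (Submodule.subset_span (Set.mem_insert _ _))))
          (Submodule.mem_sup_right (Submodule.smul_mem _ _ (Submodule.mem_span_singleton_self _)))
      · exact Submodule.add_mem _
          (Submodule.mem_sup_left (Submodule.mem_sup_left
            (Submodule.subset_span (Set.mem_insert_of_mem _ rfl))))
          (Submodule.mem_sup_right (Submodule.smul_mem _ _ (Submodule.mem_span_singleton_self _)))
    rw [eq_top_iff]
    intro x _
    exact hadjle (hadj.symm ▸ Algebra.mem_top)
  have hspan : ∀ z₁ z₂ : Aalg F α, z₁ ∈ M → z₂ ∈ M →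
      (∃ c₁ c₂ : F, Algebra.adjoin F ({z₁ + c₁ • 1, z₂ + c₂ • 1} : Set (Aalg F α)) = ⊤) →
      Submodule.map M2.mkQ M = Submodule.span F {M2.mkQ z₁, M2.mkQ z₂} := by
    intro z₁ z₂ hz₁ hz₂ hadj
    have htop := hNtop z₁ z₂ hz₁ hz₂ hadj
    apply le_antisymm
    · rintro _ ⟨m, hm, rfl⟩
      have hmN : m ∈ Submodule.span F {z₁, z₂} ⊔ M2 ⊔ Submodule.span F {(1 : Aalg F α)} := by
        rw [htop]; exact Submodule.mem_top
      obtain ⟨q, hq, u, hu, rfl⟩ := Submodule.mem_sup.1 hmN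
      obtain ⟨l, hl, m2, hm2, rfl⟩ := Submodule.mem_sup.1 hq
      obtain ⟨c, rfl⟩ := Submodule.mem_span_singleton.1 hu
      have hlM : l ∈ M := by
        refine Submodule.span_le.2 ?_ hl
        rintro x (rfl | rfl)
        · exact hz₁
        · exact hz₂
      have hεm : ε (l + m2 + c • 1) = c := by
        rw [map_add, map_add, map_smul, map_one, (hεM l).1 hlM, (hεM m2).1 (hM2M hm2)]
        simp
      have hc : c = 0 := by rw [← hεm]; exact (hεM _).1 hm
      subst hc
      have hmk : M2.mkQ (l + m2 + (0 : F) • 1) = M2.mkQ l := by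
        rw [map_add, map_add]
        have h2 : M2.mkQ m2 = 0 := (Submodule.Quotient.mk_eq_zero M2).2 hm2
        simp [h2]
      rw [hmk]
      have : M2.mkQ l ∈ Submodule.map M2.mkQ (Submodule.span F {z₁, z₂}) :=
        Submodule.mem_map_of_mem hl
      rwa [Submodule.map_span, Set.image_insert_eq, Set.image_singleton] at this
    · rw [Submodule.span_le]
      rintro _ (rfl | rfl)
      · exact Submodule.mem_map_of_mem hz₁
      · exact Submodule.mem_map_of_mem hz₂
  -- the images of the generators generate A as an algebra
  have hadjx : Algebra.adjoin F ({AalgMk F α (FreeAlgebra.ι F 0),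
      AalgMk F α (FreeAlgebra.ι F 1)} : Set (Aalg F α)) = ⊤ := by
    rw [eq_top_iff]
    rintro a -
    obtain ⟨p, rfl⟩ := surjAalg F α a
    induction p using FreeAlgebra.induction with
    | grade0 r =>
        exact (show AalgMk F α (algebraMap F _ r) = algebraMap F (Aalg F α) r from rfl) ▸
          algebraMap_mem _ r
    | grade1 i =>
        apply Algebra.subset_adjoin
        fin_cases i
        · exact Set.mem_insert _ _
        · exact Set.mem_insert_of_mem _ rfl
    | mul a b ha hb => rw [map_mul]; exact mul_mem ha hb
    | add a b ha hb => rw [map_add]; exact add_mem ha hb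
  have hspan1 : Submodule.map M2.mkQ M
      = Submodule.span F {M2.mkQ (AalgMk F α (FreeAlgebra.ι F 0)),
          M2.mkQ (AalgMk F α (FreeAlgebra.ι F 1))} := by
    refine hspan _ _ hx0M hx1M ⟨0, 0, ?_⟩
    simpa using hadjx
  -- linear independence of the generator classes
  have hM2ker : M2 ≤ LinearMap.ker (phiF F α) := by
    rw [hM2, Submodule.span_le]
    rintro x ⟨a, ha, b, hb, rfl⟩
    obtain ⟨p, rfl⟩ := surjAalg F α a
    obtain ⟨q, rfl⟩ := surjAalg F α b
    have hmul : AalgMk F α p * AalgMk F α q = AalgMk F α (p * q) := (map_mul _ _ _).symm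
    have h1 : (psiF F p).fst = 0 := by
      rw [← eps_eq F α ε hε0 hε1]; exact (hεM _).1 ha
    have h2 : (psiF F q).fst = 0 := by
      rw [← eps_eq F α ε hε0 hε1]; exact (hεM _).1 hb
    rw [SetLike.mem_coe, LinearMap.mem_ker, hmul, phiF_mk, map_mul,
      TrivSqZeroExt.snd_mul, h1, h2]
    simp
  set phibar := M2.liftQ (phiF F α) hM2ker with hphibar
  have hcomp : ∀ a : Aalg F α, phibar (M2.mkQ a) = phiF F α a := by
    intro a
    rw [hphibar, Submodule.mkQ_apply, Submodule.liftQ_apply]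
  have hsingle : ∀ i : Fin 2,
      phibar (M2.mkQ (AalgMk F α (FreeAlgebra.ι F i))) = Pi.single i 1 := by
    intro i
    rw [hcomp, phiF_mk]
    simp [psiF]
  have hindep_pi : LinearIndependent F ![(Pi.single 0 1 : Fin 2 → F), Pi.single 1 1] := by
    have hbe : ![(Pi.single 0 1 : Fin 2 → F), Pi.single 1 1] = ⇑(Pi.basisFun F (Fin 2)) := by
      funext i
      fin_cases i <;> simp [Pi.basisFun_apply]
    rw [hbe]
    exact (Pi.basisFun F (Fin 2)).linearIndependent
  have hindep1 : LinearIndependent F ![M2.mkQ (AalgMk F α (FreeAlgebra.ι F 0)),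
      M2.mkQ (AalgMk F α (FreeAlgebra.ι F 1))] := by
    apply LinearIndependent.of_comp phibar
    have hce : ⇑phibar ∘ ![M2.mkQ (AalgMk F α (FreeAlgebra.ι F 0)),
        M2.mkQ (AalgMk F α (FreeAlgebra.ι F 1))]
        = ![(Pi.single 0 1 : Fin 2 → F), Pi.single 1 1] := by
      funext i
      fin_cases i
      · simpa using hsingle 0
      · simpa using hsingle 1
    rw [hce]
    exact hindep_pi
  have hrange1 : Set.range ![M2.mkQ (AalgMk F α (FreeAlgebra.ι F 0)),
      M2.mkQ (AalgMk F α (FreeAlgebra.ι F 1))]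
      = {M2.mkQ (AalgMk F α (FreeAlgebra.ι F 0)), M2.mkQ (AalgMk F α (FreeAlgebra.ι F 1))} := by
    exact range_pair _ _
  have hfin1 : Module.finrank F (Submodule.map M2.mkQ M) = 2 := by
    rw [hspan1, ← hrange1, finrank_span_eq_card hindep1]
    simp
  refine ⟨⟨hspan1, hindep1, hfin1⟩, ?_⟩
  intro y₁ y₂ hy
  have hz : ∀ y : Aalg F α, y - ε y • 1 ∈ M := by
    intro y
    rw [hεM, map_sub, map_smul, map_one, smul_eq_mul, mul_one, sub_self]
  have hsp2 : Submodule.map M2.mkQ M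
      = Submodule.span F {M2.mkQ (y₁ - ε y₁ • 1), M2.mkQ (y₂ - ε y₂ • 1)} := by
    refine hspan _ _ (hz y₁) (hz y₂) ⟨ε y₁, ε y₂, ?_⟩
    simpa [sub_add_cancel] using hy
  refine ⟨?_, hsp2⟩
  rw [linearIndependent_iff_card_eq_finrank_span]
  have hrange2 : Set.range ![M2.mkQ (y₁ - ε y₁ • 1), M2.mkQ (y₂ - ε y₂ • 1)]
      = {M2.mkQ (y₁ - ε y₁ • 1), M2.mkQ (y₂ - ε y₂ • 1)} := by
    exact range_pair _ _
  rw [Set.finrank, hrange2, ← hsp2, hfin1]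
  simp
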